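/- There exists a constant c > 0 such that for every n, every σ with σ < n−1, and every string T ∈ [1..σ]^{n−1}#, the number of arcs of the CDAWG of T is at least c·log n; that is, e_T ≥ c·log n. -/

import Mathlib

/-! Basic definitions: strings are lists of naturals; the separator `#` is `0`;
the alphabet is `Σ = [1..σ]`. Occurrences are taken in the circular version of `T`. -/

noncomputable section
open Classical

/-- `T` is a string over the alphabet `[1..σ]` followed by the separator `# = 0`
(so `#` occurs in `T` exactly once, at the last position). -/
def Wellformed (σ : ℕ) (T : List ℕ) : Prop :=
  ∃ S : List ℕ, T = S ++ [0] ∧ ∀ c ∈ S, 1 ≤ c ∧ c ≤ σ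

/-- The rotation of `T` starting at position `i`. -/
def rot (T : List ℕ) (i : ℕ) : List ℕ := T.drop i ++ T.take i

/-- `W` occurs at position `i` of the circular version of `T`. -/
def CircOccAt (T W : List ℕ) (i : ℕ) : Prop :=
  ∀ j < W.length, W.getD j 0 = T.getD ((i + j) % T.length) 0

/-- `𝒫_T(W)`: the set of starting positions of occurrences of `W` in the circular
version of `T`. -/
def Pset (T W : List ℕ) : Finset ℕ :=
  (Finset.range T.length).filter (fun i => CircOccAt T W i)

/-- `W` occurs in the circular version of `T`. -/
def OccursCirc (T W : List ℕ) : Prop := (Pset T W).Nonempty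

/-- `Σ^ℓ_T(W)`: the set of characters `a` such that `aW` occurs in circular `T`. -/
def SigmaL (T W : List ℕ) : Finset ℕ :=
  T.toFinset.filter (fun a => OccursCirc T (a :: W))

/-- `Σ^r_T(W)`: the set of characters `b` such that `Wb` occurs in circular `T`. -/
def SigmaR (T W : List ℕ) : Finset ℕ :=
  T.toFinset.filter (fun b => OccursCirc T (W ++ [b]))

/-- `W` is left-maximal in `T`. -/
def LeftMaximal (T W : List ℕ) : Prop := 1 < (SigmaL T W).card

/-- `W` is right-maximal in `T`. -/
def RightMaximal (T W : List ℕ) : Prop := 1 < (SigmaR T W).card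

/-- The (finite) collection of substrings of the circular version of `T`. -/
def circSubstrings (T : List ℕ) : Finset (List ℕ) :=
  ((Finset.range T.length) ×ˢ (Finset.range (T.length + 1))).image
    (fun p => (rot T p.1).take p.2)

/-- `ℳ_T`: the set of nonempty maximal repeats of `T`, i.e. repeats that are both
left-maximal and right-maximal.  (Every maximal repeat occurs in circular `T` and has
length at most `|T|`, so it belongs to `circSubstrings T`.) -/
def MaxRepeats (T : List ℕ) : Finset (List ℕ) :=
  (circSubstrings T).filter
    (fun W => W ≠ [] ∧ 1 < (Pset T W).card ∧ LeftMaximal T W ∧ RightMaximal T W)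

/-- Strict lexicographic comparison of strings (a proper prefix is smaller). -/
def lexLt : List ℕ → List ℕ → Bool
  | [], [] => false
  | [], _ :: _ => true
  | _ :: _, [] => false
  | a :: A, b :: B => decide (a < b) || (a == b && lexLt A B)

/-- Non-strict lexicographic comparison. -/
def lexLe (A B : List ℕ) : Bool := !(lexLt B A)

/-- The Burrows–Wheeler transform of `T`: the `i`-th character of `BWT T` is the last
character of the lexicographically `i`-th rotation of `T`. -/
def BWT (T : List ℕ) : List ℕ :=
  (((List.range T.length).map (rot T)).mergeSort lexLe).map (fun R => R.getLast!)

/-- The number of runs of a string, i.e. the number of maximal intervals on which all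
characters are equal. -/
def numRuns : List ℕ → ℕ
  | [] => 0
  | [_] => 1
  | a :: b :: l => (if a = b then 0 else 1) + numRuns (b :: l)


noncomputable section
open Classical

/-- `ℳ^r_T`: the set of rightmost maximal repeats of `T`: maximal repeats `W` such that
no string `WV` with `V` nonempty is left-maximal in `T`. -/
def RightmostMaxRepeats (T : List ℕ) : Finset (List ℕ) :=
  (MaxRepeats T).filter (fun W => ∀ V : List ℕ, V ≠ [] → ¬ LeftMaximal T (W ++ V))

/-- `Y` is the shortest right-maximal extension of `X` in `T`: the shortest
right-maximal string of `T` having `X` as a prefix. -/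
def ShortestRightMaxExt (T X Y : List ℕ) : Prop :=
  X <+: Y ∧ RightMaximal T Y ∧
    ∀ Z : List ℕ, X <+: Z → RightMaximal T Z → Y.length ≤ Z.length

/-- `ℱ^r_T`: pairs `(V, b)` with `V ∈ ℳ_T ∪ {ε}` and `b ∈ Σ^r_T(V)` such that either
`Vb` occurs exactly once in circular `T`, or the shortest right-maximal extension of
`Vb` is not a maximal repeat of `T`.  These pairs correspond to the suffix-tree edges
of `T` from maximal-repeat nodes to non-maximal-repeat nodes. -/
def Fr (T : List ℕ) : Finset (List ℕ × ℕ) :=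
  ((insert ([] : List ℕ) (MaxRepeats T)) ×ˢ T.toFinset).filter
    (fun p => p.2 ∈ SigmaR T p.1 ∧
      ((Pset T (p.1 ++ [p.2])).card = 1 ∨
        ∀ Y : List ℕ, ShortestRightMaxExt T (p.1 ++ [p.2]) Y → Y ∉ MaxRepeats T))

/-- `e_T`: the number of right extensions of maximal repeats of `T`, i.e. the number of
pairs `(V, b)` with `V ∈ ℳ_T ∪ {ε}` and `b ∈ Σ^r_T(V)`.  This equals the number of
arcs of the CDAWG of `T`. -/
def eCount (T : List ℕ) : ℕ :=
  ∑ V ∈ insert ([] : List ℕ) (MaxRepeats T), (SigmaR T V).card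

/-- The next LZ77 factor, to be placed at position `k` of `T`, may be `F` if `F` is a
single character (every single character of `T` has a source among the `σ+1` distinct
characters virtually preceding `T`), or if `F` has an occurrence in `T` starting at a
position `j` strictly before `k`. -/
def LZsource (T : List ℕ) (k : ℕ) (F : List ℕ) : Prop :=
  F.length = 1 ∨ ∃ j, j < k ∧ F <+: T.drop j

/-- `fs` is the LZ77 factorization of `T` (greedy: each factor is the longest prefix of
the remaining suffix admitting a source). -/
def IsLZ77 (T : List ℕ) (fs : List (List ℕ)) : Prop :=
  fs.flatten = T ∧ (∀ F ∈ fs, F ≠ []) ∧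
    ∀ i, (h : i < fs.length) →
      LZsource T ((fs.take i).flatten).length (fs.get ⟨i, h⟩) ∧
      ∀ F' : List ℕ, F' <+: T.drop ((fs.take i).flatten).length →
        (fs.get ⟨i, h⟩).length < F'.length →
          ¬ LZsource T ((fs.take i).flatten).length F'

/-- `N_T(X)`: the number of rotations of `T` lexicographically smaller than `X`. -/
def Nrank (T X : List ℕ) : ℕ :=
  ((List.range T.length).filter (fun i => lexLt (rot T i) X)).length

/-- The string `a b a² b a³ b ⋯ aˣ b #`. -/
def Tx (a b x : ℕ) : List ℕ :=
  (((List.range x).map (fun i => List.replicate (i + 1) a ++ [b])).flatten) ++ [0]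

end

section EProofBasic
open Classical

namespace EP

variable (T : List ℕ)

lemma mem_Pset {W : List ℕ} {p : ℕ} :
    p ∈ Pset T W ↔ p < T.length ∧ CircOccAt T W p := by
  simp [Pset, Finset.mem_filter, Finset.mem_range]

lemma circOccAt_of_prefix {W W' : List ℕ} (h : W' <+: W) {i : ℕ}
    (hi : CircOccAt T W i) : CircOccAt T W' i := by
  obtain ⟨s, rfl⟩ := h
  intro j hj
  have hj' : j < W'.length + s.length := by omega
  have := hi j (by simpa using hj')
  rwa [List.getD_eq_getElem _ _ (by simpa using hj'),
    List.getElem_append_left (by simpa using hj), ← List.getD_eq_getElem] at this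

lemma circOccAt_append_right {X Y : List ℕ} {i : ℕ}
    (h : CircOccAt T (X ++ Y) i) : CircOccAt T Y ((i + X.length) % T.length) := by
  intro j hj
  have hj' : X.length + j < (X ++ Y).length := by simp; omega
  have := h (X.length + j) hj'
  rw [List.getD_eq_getElem _ _ hj', List.getElem_append_right (by omega)] at this
  simp only [Nat.add_sub_cancel_left] at this
  rw [← List.getD_eq_getElem] at this
  rw [this, Nat.mod_add_mod, ← Nat.add_assoc]

lemma circOccAt_append {X Y : List ℕ} {i : ℕ} (hX : CircOccAt T X i)
    (hY : CircOccAt T Y ((i + X.length) % T.length)) : CircOccAt T (X ++ Y) i := by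
  intro j hj
  rcases Nat.lt_or_ge j X.length with hc | hc
  · rw [List.getD_eq_getElem _ _ hj, List.getElem_append_left hc, ← List.getD_eq_getElem]
    exact hX j hc
  · have hjY : j - X.length < Y.length := by simp at hj; omega
    rw [List.getD_eq_getElem _ _ hj, List.getElem_append_right hc, ← List.getD_eq_getElem]
    have := hY (j - X.length) hjY
    rw [this, Nat.mod_add_mod]
    congr 2
    omega

lemma length_rot (i : ℕ) : (rot T i).length = T.length := by
  simp [rot]
  omega

lemma rot_getD {i j : ℕ} (hi : i < T.length) (hj : j < T.length) :
    (rot T i).getD j 0 = T.getD ((i + j) % T.length) 0 := by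
  rcases Nat.lt_or_ge j (T.length - i) with hc | hc
  · have hmod : (i + j) % T.length = i + j := Nat.mod_eq_of_lt (by omega)
    have h1 : j < (T.drop i).length := by simp; omega
    rw [hmod, rot, List.getD_append _ _ _ _ h1, List.getD_eq_getElem _ _ h1,
      List.getElem_drop, ← List.getD_eq_getElem _ _ (show i + j < T.length by omega)]
  · have hmod : (i + j) % T.length = i + j - T.length := by
      rw [Nat.mod_eq_sub_mod (by omega), Nat.mod_eq_of_lt (by omega)]
    have hlen : (T.drop i).length ≤ j := by simp; omega
    rw [hmod, rot, List.getD_append_right _ _ _ _ hlen]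
    have key : j - (T.drop i).length = i + j - T.length := by simp; omega
    have h2 : i + j - T.length < (T.take i).length := by simp; omega
    rw [key, List.getD_eq_getElem _ _ h2, List.getElem_take,
      ← List.getD_eq_getElem _ _ (show i + j - T.length < T.length by omega)]

lemma occ_rot_take {i : ℕ} (hi : i < T.length) {t : ℕ} (ht : t ≤ T.length) :
    CircOccAt T ((rot T i).take t) i := by
  intro j hj
  have hjt : j < t := by simp [length_rot] at hj; omega
  have hjn : j < T.length := by omega
  have h1 : j < ((rot T i).take t).length := hj
  rw [List.getD_eq_getElem _ _ h1, List.getElem_take, ← List.getD_eq_getElem]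
  exact rot_getD T hi hjn

lemma getD_mem_toFinset {x : ℕ} (h : x < T.length) : T.getD x 0 ∈ T.toFinset := by
  rw [List.getD_eq_getElem _ _ h, List.mem_toFinset]
  exact List.getElem_mem _

end EP
end EProofBasic

section EProof2
open Classical

namespace EP

variable (T : List ℕ)

/-- The string of length `k` circularly preceding position `p`. -/
def rb (p k : ℕ) : List ℕ :=
  (List.range k).map fun j => T.getD ((p + (T.length - k) + j) % T.length) 0

lemma length_rb (p k : ℕ) : (rb T p k).length = k := by simp [rb]

lemma rb_getD {p k j : ℕ} (hj : j < k) :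
    (rb T p k).getD j 0 = T.getD ((p + (T.length - k) + j) % T.length) 0 := by
  have h1 : j < (rb T p k).length := by rw [length_rb]; exact hj
  rw [List.getD_eq_getElem _ _ h1]
  simp [rb]

lemma rb_zero (p : ℕ) : rb T p 0 = [] := by simp [rb]

lemma rb_succ {p k : ℕ} (hk : k < T.length) :
    rb T p (k + 1) = T.getD ((p + (T.length - (k + 1))) % T.length) 0 :: rb T p k := by
  apply List.ext_getElem
  · simp [length_rb]
  · intro j h1 h2
    rcases Nat.eq_zero_or_pos j with rfl | hj
    · simp [rb]
    · have hj1 : j - 1 < k := by simp [length_rb] at h2; omega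
      have e1 : (rb T p (k+1))[j] = (rb T p (k+1)).getD j 0 := by
        rw [List.getD_eq_getElem]
      have e2 : (T.getD ((p + (T.length - (k + 1))) % T.length) 0 :: rb T p k)[j]
          = (rb T p k).getD (j-1) 0 := by
        rcases Nat.exists_eq_add_of_lt hj with ⟨j', rfl⟩
        simp only [Nat.zero_add, List.getElem_cons_succ]
        rw [List.getD_eq_getElem (rb T p k) 0 (by rw [length_rb]; omega)]
        simp
      rw [e1, e2, rb_getD T (by omega), rb_getD T hj1]
      congr 1
      have : p + (T.length - (k+1)) + j = p + (T.length - k) + (j - 1) := by omega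
      rw [this]

lemma occ_rb (p : ℕ) {k : ℕ} (hk : k ≤ T.length) :
    CircOccAt T (rb T p k) ((p + (T.length - k)) % T.length) := by
  intro j hj
  rw [length_rb] at hj
  rw [rb_getD T hj, Nat.mod_add_mod]

/-- All occurrences of `W` are preceded by the same string of length `k`. -/
def Forced (W : List ℕ) (k : ℕ) : Prop :=
  ∀ p ∈ Pset T W, ∀ q ∈ Pset T W, rb T p k = rb T q k

lemma forced_zero (W : List ℕ) : Forced T W 0 := by
  intro p _ q _
  simp [rb_zero]

lemma forced_of_succ {W : List ℕ} {k : ℕ} (hk : k < T.length)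
    (h : Forced T W (k + 1)) : Forced T W k := by
  intro p hp q hq
  have := h p hp q hq
  rw [rb_succ T hk, rb_succ T hk] at this
  exact List.tail_eq_of_cons_eq this

lemma forced_mono {W W' : List ℕ} (hsub : Pset T W' ⊆ Pset T W) {k : ℕ}
    (h : Forced T W k) : Forced T W' k :=
  fun p hp q hq => h p (hsub hp) q (hsub hq)

/-- Length of the longest forced left-extension of `W`. -/
def kap (W : List ℕ) : ℕ := Nat.findGreatest (fun k => Forced T W k) T.length

lemma forced_kap (W : List ℕ) : Forced T W (kap T W) :=
  Nat.findGreatest_spec (Nat.zero_le _) (forced_zero T W)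

lemma kap_le (W : List ℕ) : kap T W ≤ T.length := Nat.findGreatest_le _

lemma kap_mono {W W' : List ℕ} (hsub : Pset T W' ⊆ Pset T W) :
    kap T W ≤ kap T W' :=
  Nat.le_findGreatest (kap_le T W) (forced_mono T hsub (forced_kap T W))

/-- The left-closure of `W`: the longest forced left-extension. -/
def lc (W : List ℕ) : List ℕ :=
  if h : (Pset T W).Nonempty then rb T ((Pset T W).min' h) (kap T W) ++ W else W

lemma lc_eq {W : List ℕ} (h : (Pset T W).Nonempty) {p : ℕ} (hp : p ∈ Pset T W) :
    lc T W = rb T p (kap T W) ++ W := by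
  rw [lc, dif_pos h]
  congr 1
  exact forced_kap T W _ ((Pset T W).min'_mem h) _ hp

lemma length_lc {W : List ℕ} (h : (Pset T W).Nonempty) :
    (lc T W).length = kap T W + W.length := by
  rw [lc, dif_pos h]
  simp [length_rb]

lemma occ_lc {W : List ℕ} {p : ℕ} (hp : p ∈ Pset T W) :
    ((p + (T.length - kap T W)) % T.length) ∈ Pset T (lc T W) := by
  have h : (Pset T W).Nonempty := ⟨p, hp⟩
  have hn : 0 < T.length := (mem_Pset T).mp hp |>.1.trans_le' (Nat.zero_le _) |> fun h => h
  rw [mem_Pset]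
  constructor
  · exact Nat.mod_lt _ (by have := (mem_Pset T).mp hp; omega)
  · rw [lc_eq T h hp]
    apply circOccAt_append
    · exact occ_rb T p (kap_le T W)
    · rw [length_rb, Nat.mod_add_mod]
      have hplt : p < T.length := ((mem_Pset T).mp hp).1
      have : (p + (T.length - kap T W) + kap T W) % T.length = p := by
        have hk := kap_le T W
        have : p + (T.length - kap T W) + kap T W = p + T.length := by omega
        rw [this, Nat.add_mod_right, Nat.mod_eq_of_lt hplt]
      rw [this]
      exact ((mem_Pset T).mp hp).2

lemma shift_inj {p q c : ℕ} (hp : p < T.length) (hq : q < T.length)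
    (h : (p + c) % T.length = (q + c) % T.length) : p = q := by
  have h1 : p ≡ q [MOD T.length] := Nat.ModEq.add_right_cancel' c h
  have := h1.eq_of_lt_of_lt hp hq
  exact this

end EP
end EProof2

section EProof3
open Classical

namespace EP

variable {T : List ℕ}

/-- Convenient form of wellformedness. -/
def WF (T : List ℕ) : Prop := (∃ S : List ℕ, T = S ++ [0] ∧ ∀ c ∈ S, 1 ≤ c) ∧ 2 ≤ T.length

lemma WF.getD_eq_zero_iff (hT : WF T) {x : ℕ} (hx : x < T.length) :
    T.getD x 0 = 0 ↔ x = T.length - 1 := by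
  obtain ⟨⟨S, rfl, hS⟩, hlen⟩ := hT
  have hSlen : (S ++ [0]).length = S.length + 1 := by simp
  constructor
  · intro h
    by_contra hne
    have hxS : x < S.length := by simp at hx ⊢; omega
    rw [List.getD_append _ _ _ _ hxS, List.getD_eq_getElem _ _ hxS] at h
    have := hS _ (List.getElem_mem hxS)
    omega
  · intro h
    subst h
    rw [List.getD_append_right _ _ _ _ (by simp)]
    simp

lemma WF.getD_last (hT : WF T) : T.getD (T.length - 1) 0 = 0 :=
  (hT.getD_eq_zero_iff (by have := hT.2; omega)).mpr rfl

lemma WF.length_pos (hT : WF T) : 0 < T.length := by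
  have := hT.2; omega

/-- A string of length `≥ |T| - 1` occurs at most once circularly. -/
lemma WF.occ_unique (hT : WF T) {V : List ℕ} {p q : ℕ} (hp : p < T.length)
    (hq : q < T.length) (hV : T.length - 1 ≤ V.length)
    (op : CircOccAt T V p) (oq : CircOccAt T V q) : p = q := by
  have hn := hT.2
  have key : ∀ a b : ℕ, a < T.length → b < T.length → 0 < a →
      CircOccAt T V a → CircOccAt T V b → a = b := by
    intro a b ha hb hapos oa ob
    set n := T.length with hn'
    have hj0 : n - 1 - a < V.length := by omega
    have e1 := oa (n - 1 - a) hj0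
    have e2 := ob (n - 1 - a) hj0
    have hidx : (a + (n - 1 - a)) % n = n - 1 := by
      rw [show a + (n - 1 - a) = n - 1 by omega, Nat.mod_eq_of_lt (by omega)]
    rw [hidx, hT.getD_last] at e1
    rw [e1] at e2
    have hblt : (b + (n - 1 - a)) % n < n := Nat.mod_lt _ (by omega)
    have := (hT.getD_eq_zero_iff hblt).mp e2.symm
    rcases Nat.lt_or_ge (b + (n - 1 - a)) n with hc | hc
    · rw [Nat.mod_eq_of_lt hc] at this; omega
    · rw [Nat.mod_eq_sub_mod hc, Nat.mod_eq_of_lt (by omega)] at this; omega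
  rcases Nat.eq_zero_or_pos p with rfl | hppos
  · rcases Nat.eq_zero_or_pos q with rfl | hqpos
    · rfl
    · exact (key q 0 hq hp hqpos oq op).symm
  · exact key p q hp hq hppos op oq

lemma WF.rot_inj (hT : WF T) {i i' : ℕ} (hi : i < T.length) (hi' : i' < T.length)
    (h : rot T i = rot T i') : i = i' := by
  have o1 : CircOccAt T (rot T i) i := by
    have := occ_rot_take T hi (le_refl T.length)
    rwa [List.take_of_length_le (by rw [length_rot])] at this
  have o2 : CircOccAt T (rot T i) i' := by
    rw [h]
    have := occ_rot_take T hi' (le_refl T.length)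
    rwa [List.take_of_length_le (by rw [length_rot])] at this
  exact hT.occ_unique hi hi' (by rw [length_rot]; omega) o1 o2

end EP
end EProof3

section EProof4
open Classical

namespace EP

variable {T : List ℕ}

lemma Pset_anti {W W' : List ℕ} (h : W' <+: W) : Pset T W ⊆ Pset T W' := by
  intro p hp
  rw [mem_Pset] at hp ⊢
  exact ⟨hp.1, circOccAt_of_prefix T h hp.2⟩

lemma getD_off_eq {W : List ℕ} {b p : ℕ} (hp : p ∈ Pset T (W ++ [b])) :
    T.getD ((p + W.length) % T.length) 0 = b := by
  have h := ((mem_Pset T).mp hp).2 W.length (by simp)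
  rw [List.getD_append_right _ _ _ _ (le_refl _)] at h
  simpa using h.symm

lemma two_le_Pset_card {W : List ℕ} (hrm : RightMaximal T W) :
    1 < (Pset T W).card := by
  rw [RightMaximal, Finset.one_lt_card] at hrm
  obtain ⟨b1, hb1, b2, hb2, hne⟩ := hrm
  rw [SigmaR, Finset.mem_filter] at hb1 hb2
  obtain ⟨p1, hp1⟩ := hb1.2
  obtain ⟨p2, hp2⟩ := hb2.2
  rw [Finset.one_lt_card]
  refine ⟨p1, Pset_anti (List.prefix_append _ _) hp1, p2,
    Pset_anti (List.prefix_append _ _) hp2, ?_⟩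
  intro hcontra
  apply hne
  rw [← getD_off_eq hp1, ← getD_off_eq hp2, hcontra]

lemma forced_down {W : List ℕ} {k k' : ℕ} (hk' : k' ≤ k) (hk : k ≤ T.length)
    (h : Forced T W k) : Forced T W k' := by
  induction k with
  | zero => have : k' = 0 := by omega
            subst this; exact h
  | succ m ih =>
    rcases Nat.eq_or_lt_of_le hk' with rfl | hlt
    · exact h
    · exact ih (by omega) (by omega) (forced_of_succ T (by omega) h)

lemma WF.getD_zero_pos (hT : WF T) : 0 < T.getD 0 0 := by
  have h2 := hT.2
  have := hT.getD_eq_zero_iff (x := 0) (by omega)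
  omega

lemma Pset_nil : Pset T [] = Finset.range T.length := by
  ext p
  rw [mem_Pset, Finset.mem_range]
  exact ⟨fun h => h.1, fun h => ⟨h, fun j hj => by simp at hj⟩⟩

lemma WF.kap_nil (hT : WF T) : kap T ([] : List ℕ) = 0 := by
  by_contra h
  have h1 : 1 ≤ kap T ([] : List ℕ) := by omega
  have hF : Forced T [] 1 :=
    forced_down h1 (kap_le T []) (forced_kap T ([] : List ℕ))
  have hn := hT.2
  have h0 : (0 : ℕ) ∈ Pset T ([] : List ℕ) := by rw [Pset_nil]; simp; omega
  have h01 : (1 : ℕ) ∈ Pset T ([] : List ℕ) := by rw [Pset_nil]; simp; omega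
  have := hF 0 h0 1 h01
  rw [rb_succ T (by omega), rb_succ T (by omega), rb_zero, rb_zero] at this
  have heq := List.head_eq_of_cons_eq this
  rw [show (0 + (T.length - 1)) % T.length = T.length - 1 by
      rw [Nat.zero_add]; exact Nat.mod_eq_of_lt (by omega),
    show (1 + (T.length - 1)) % T.length = 0 by
      rw [show 1 + (T.length - 1) = T.length by omega, Nat.mod_self]] at heq
  have := hT.getD_last
  have := hT.getD_zero_pos
  omega

lemma WF.lc_nil (hT : WF T) : lc T ([] : List ℕ) = [] := by
  have hne : (Pset T ([] : List ℕ)).Nonempty := by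
    rw [Pset_nil]
    exact ⟨0, by simp [hT.length_pos]⟩
  rw [lc, dif_pos hne, hT.kap_nil, rb_zero]
  rfl

lemma sigmaR_lc {W : List ℕ} (hne : (Pset T W).Nonempty) :
    SigmaR T W ⊆ SigmaR T (lc T W) := by
  intro b hb
  rw [SigmaR, Finset.mem_filter] at hb ⊢
  refine ⟨hb.1, ?_⟩
  obtain ⟨r, hr⟩ := hb.2
  have hrW : r ∈ Pset T W := Pset_anti (List.prefix_append _ _) hr
  have hrlt : r < T.length := ((mem_Pset T).mp hrW).1
  have hocc := occ_lc T hrW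
  refine ⟨(r + (T.length - kap T W)) % T.length, ?_⟩
  rw [mem_Pset] at hocc ⊢
  refine ⟨hocc.1, ?_⟩
  have hassoc : lc T W ++ [b] = rb T r (kap T W) ++ (W ++ [b]) := by
    rw [lc_eq T hne hrW, List.append_assoc]
  rw [hassoc]
  apply circOccAt_append
  · exact occ_rb T r (kap_le T W)
  · rw [length_rb, Nat.mod_add_mod]
    have : (r + (T.length - kap T W) + kap T W) % T.length = r := by
      rw [show r + (T.length - kap T W) + kap T W = r + T.length by
          have := kap_le T W; omega,
        Nat.add_mod_right, Nat.mod_eq_of_lt hrlt]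
    rw [this]
    exact ((mem_Pset T).mp hr).2

lemma WF.kap_bound (hT : WF T) {W : List ℕ} (hcard : 1 < (Pset T W).card) :
    kap T W + W.length + 2 ≤ T.length := by
  obtain ⟨p1, hp1, p2, hp2, hne⟩ := Finset.one_lt_card.mp hcard
  have h1 := occ_lc T hp1
  have h2 := occ_lc T hp2
  by_contra hbig
  have hlen : T.length - 1 ≤ (lc T W).length := by
    rw [length_lc T ⟨p1, hp1⟩]; omega
  have := hT.occ_unique ((mem_Pset T).mp h1).1 ((mem_Pset T).mp h2).1 hlen
    ((mem_Pset T).mp h1).2 ((mem_Pset T).mp h2).2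
  exact hne (shift_inj T ((mem_Pset T).mp hp1).1 ((mem_Pset T).mp hp2).1 this)

lemma WF.leftMaximal_lc (hT : WF T) {W : List ℕ} (hcard : 1 < (Pset T W).card) :
    LeftMaximal T (lc T W) := by
  have hne : (Pset T W).Nonempty := Finset.card_pos.mp (by omega)
  have hklt := hT.kap_bound hcard
  have hnotF : ¬ Forced T W (kap T W + 1) :=
    Nat.findGreatest_is_greatest (P := fun k => Forced T W k) (n := T.length)
      (Nat.lt_succ_self _) (by omega)
  rw [Forced] at hnotF
  push_neg at hnotF
  obtain ⟨p, hp, q, hq, hrbne⟩ := hnotF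
  have hklt' : kap T W < T.length := by omega
  rw [rb_succ T hklt', rb_succ T hklt'] at hrbne
  have htail : rb T p (kap T W) = rb T q (kap T W) := forced_kap T W p hp q hq
  have hheads : T.getD ((p + (T.length - (kap T W + 1))) % T.length) 0 ≠
      T.getD ((q + (T.length - (kap T W + 1))) % T.length) 0 := by
    intro h
    exact hrbne (by rw [h, htail])
  -- each head, prepended to lc W, occurs
  have key : ∀ r ∈ Pset T W,
      (T.getD ((r + (T.length - (kap T W + 1))) % T.length) 0) ∈ SigmaL T (lc T W) := by
    intro r hr
    have hrlt : r < T.length := ((mem_Pset T).mp hr).1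
    rw [SigmaL, Finset.mem_filter]
    constructor
    · exact getD_mem_toFinset T (Nat.mod_lt _ (by omega))
    · refine ⟨(r + (T.length - (kap T W + 1))) % T.length, ?_⟩
      rw [mem_Pset]
      refine ⟨Nat.mod_lt _ (by omega), ?_⟩
      have hcons : (T.getD ((r + (T.length - (kap T W + 1))) % T.length) 0) :: lc T W
          = rb T r (kap T W + 1) ++ W := by
        rw [lc_eq T hne hr, rb_succ T hklt']
        simp
      rw [hcons]
      apply circOccAt_append
      · exact occ_rb T r (by omega)
      · rw [length_rb, Nat.mod_add_mod]
        rw [show r + (T.length - (kap T W + 1)) + (kap T W + 1) = r + T.length by omega,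
          Nat.add_mod_right, Nat.mod_eq_of_lt hrlt]
        exact ((mem_Pset T).mp hr).2
  rw [LeftMaximal, Finset.one_lt_card]
  exact ⟨_, key p hp, _, key q hq, hheads⟩

lemma mem_circSubstrings_of_occ {V : List ℕ} {q : ℕ} (hq : q ∈ Pset T V)
    (hlen : V.length ≤ T.length) : V ∈ circSubstrings T := by
  rw [circSubstrings, Finset.mem_image]
  refine ⟨(q, V.length), ?_, ?_⟩
  · rw [Finset.mem_product, Finset.mem_range, Finset.mem_range]
    exact ⟨((mem_Pset T).mp hq).1, by omega⟩
  · show (rot T q).take V.length = V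
    apply List.ext_getElem
    · simp [length_rot]; omega
    · intro j h1 h2
      have hjV : j < V.length := by simp [length_rot] at h1; omega
      have hq' := ((mem_Pset T).mp hq).1
      have e := ((mem_Pset T).mp hq).2 j hjV
      rw [List.getD_eq_getElem _ _ hjV] at e
      rw [List.getElem_take]
      have hjn : j < T.length := by omega
      have := rot_getD T hq' hjn
      rw [List.getD_eq_getElem _ _ (by rw [length_rot]; omega)] at this
      exact this.trans e.symm

lemma WF.lc_mem_maxRepeats (hT : WF T) {W : List ℕ} (hWne : W ≠ [])
    (hrm : RightMaximal T W) : lc T W ∈ MaxRepeats T := by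
  have hcard : 1 < (Pset T W).card := two_le_Pset_card hrm
  have hne : (Pset T W).Nonempty := Finset.card_pos.mp (by omega)
  obtain ⟨p1, hp1, p2, hp2, hpne⟩ := Finset.one_lt_card.mp hcard
  have hkb := hT.kap_bound hcard
  rw [MaxRepeats, Finset.mem_filter]
  refine ⟨?_, ?_, ?_, ?_, ?_⟩
  · exact mem_circSubstrings_of_occ (occ_lc T hp1) (by rw [length_lc T hne]; omega)
  · intro h
    have hl := length_lc T hne
    rw [h] at hl
    simp at hl
    exact hWne (List.eq_nil_of_length_eq_zero (by omega))
  · rw [Finset.one_lt_card]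
    refine ⟨_, occ_lc T hp1, _, occ_lc T hp2, ?_⟩
    intro h
    exact hpne (shift_inj T ((mem_Pset T).mp hp1).1 ((mem_Pset T).mp hp2).1 h)
  · exact hT.leftMaximal_lc hcard
  · rw [RightMaximal]
    calc 1 < (SigmaR T W).card := hrm
    _ ≤ (SigmaR T (lc T W)).card := Finset.card_le_card (sigmaR_lc hne)

end EP
end EProof4

section EProof5
open Classical

namespace EP

variable (T : List ℕ)

/-- The arcs of the CDAWG. -/
def Arcs : Finset (List ℕ × ℕ) :=
  ((insert ([] : List ℕ) (MaxRepeats T)) ×ˢ T.toFinset).filter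
    (fun p => p.2 ∈ SigmaR T p.1)

lemma card_arcs : (Arcs T).card = eCount T := by
  have hA : Arcs T = (insert ([] : List ℕ) (MaxRepeats T)).biUnion
      (fun V => (SigmaR T V).image (fun b => (V, b))) := by
    ext ⟨V, b⟩
    rw [Arcs, Finset.mem_filter, Finset.mem_product, Finset.mem_biUnion]
    constructor
    · rintro ⟨⟨h1, _⟩, h3⟩
      exact ⟨V, h1, Finset.mem_image.mpr ⟨b, h3, rfl⟩⟩
    · rintro ⟨V', hV', hmem⟩
      obtain ⟨b', hb', heq⟩ := Finset.mem_image.mp hmem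
      obtain ⟨rfl, rfl⟩ := Prod.mk.inj heq
      exact ⟨⟨hV', (Finset.mem_filter.mp hb').1⟩, hb'⟩
  rw [hA, Finset.card_biUnion, eCount]
  · apply Finset.sum_congr rfl
    intro V _
    exact Finset.card_image_of_injective _ (fun a b h => (Prod.mk.inj h).2)
  · intro x hx y hy hxy
    rw [Function.onFun, Finset.disjoint_left]
    intro a ha hb
    obtain ⟨b1, _, rfl⟩ := Finset.mem_image.mp ha
    obtain ⟨b2, _, heq⟩ := Finset.mem_image.mp hb
    exact hxy ((Prod.mk.inj heq.symm).1)

/-- Branching positions along the rotation starting at `i`. -/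
def Bset (i : ℕ) : Finset ℕ :=
  (Finset.range T.length).filter (fun t => RightMaximal T ((rot T i).take t))

/-- The set of arcs crossed when spelling the rotation starting at `i`. -/
def Phi (i : ℕ) : Finset (List ℕ × ℕ) :=
  (Bset T i).image
    (fun t => (lc T ((rot T i).take t), T.getD ((i + t) % T.length) 0))

lemma mem_Pset_take {i : ℕ} (hi : i < T.length) {t : ℕ} (ht : t ≤ T.length) :
    i ∈ Pset T ((rot T i).take t) :=
  (mem_Pset T).mpr ⟨hi, occ_rot_take T hi ht⟩

lemma length_take_rot {i t : ℕ} (ht : t ≤ T.length) :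
    ((rot T i).take t).length = t := by
  rw [List.length_take, length_rot]
  omega

lemma take_rot_prefix (i : ℕ) {s t : ℕ} (hst : s ≤ t) :
    (rot T i).take s <+: (rot T i).take t := by
  have : (rot T i).take s = ((rot T i).take t).take s := by
    rw [List.take_take, min_eq_left hst]
  rw [this]
  exact List.take_prefix _ _

lemma lc_len_lt {i s t : ℕ} (hi : i < T.length) (hst : s < t) (ht : t ≤ T.length) :
    (lc T ((rot T i).take s)).length < (lc T ((rot T i).take t)).length := by
  have hs := mem_Pset_take T hi (t := s) (by omega)
  have htm := mem_Pset_take T hi (t := t) ht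
  rw [length_lc T ⟨i, hs⟩, length_lc T ⟨i, htm⟩,
    length_take_rot T (show s ≤ T.length by omega), length_take_rot T ht]
  have := kap_mono T (Pset_anti (take_rot_prefix T i (le_of_lt hst)))
  omega

lemma take_rot_succ {i t : ℕ} (hi : i < T.length) (ht : t < T.length) :
    (rot T i).take (t + 1) = (rot T i).take t ++ [T.getD ((i + t) % T.length) 0] := by
  rw [List.take_succ]
  congr 1
  have hlt : t < (rot T i).length := by rw [length_rot]; exact ht
  rw [List.getElem?_eq_getElem hlt]
  simp only [Option.toList_some]
  congr 1
  rw [← List.getD_eq_getElem _ 0 hlt]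
  exact rot_getD T hi ht

lemma chr_mem_sigmaR_take {i t : ℕ} (hi : i < T.length) (ht : t < T.length) :
    T.getD ((i + t) % T.length) 0 ∈ SigmaR T ((rot T i).take t) := by
  rw [SigmaR, Finset.mem_filter]
  refine ⟨getD_mem_toFinset T (Nat.mod_lt _ (by omega)), ?_⟩
  refine ⟨i, ?_⟩
  rw [← take_rot_succ T hi ht]
  exact mem_Pset_take T hi (by omega)

lemma phi_subset_arcs {hT : WF T} {i : ℕ} (hi : i < T.length) :
    Phi T i ⊆ Arcs T := by
  intro a ha
  obtain ⟨t, htB, rfl⟩ := Finset.mem_image.mp ha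
  rw [Bset, Finset.mem_filter, Finset.mem_range] at htB
  obtain ⟨htn, hrm⟩ := htB
  have hne : (Pset T ((rot T i).take t)).Nonempty := ⟨i, mem_Pset_take T hi (by omega)⟩
  have hbmem : T.getD ((i + t) % T.length) 0 ∈ SigmaR T (lc T ((rot T i).take t)) :=
    sigmaR_lc hne (chr_mem_sigmaR_take T hi htn)
  rw [Arcs, Finset.mem_filter, Finset.mem_product]
  refine ⟨⟨?_, (Finset.mem_filter.mp hbmem).1⟩, hbmem⟩
  rcases Nat.eq_zero_or_pos t with rfl | htpos
  · rw [List.take_zero, hT.lc_nil]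
    exact Finset.mem_insert_self _ _
  · apply Finset.mem_insert_of_mem
    apply hT.lc_mem_maxRepeats _ hrm
    intro hcon
    have := length_take_rot T (i := i) (show t ≤ T.length by omega)
    rw [hcon] at this
    simp at this
    omega

lemma phi_inj {hT : WF T} {i i' : ℕ} (hi : i < T.length) (hi' : i' < T.length)
    (h : Phi T i = Phi T i') : i = i' := by
  have key : ∀ t, t ≤ T.length → (rot T i).take t = (rot T i').take t := by
    intro t
    induction t with
    | zero => intro _; simp
    | succ u ih =>
      intro hu1
      have hun : u < T.length := by omega
      have hW := ih (by omega)
      rw [take_rot_succ T hi hun, take_rot_succ T hi' hun, hW]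
      congr 2
      -- show the next characters agree
      by_cases hrm : RightMaximal T ((rot T i').take u)
      · -- branching case: use the arc sets
        have huB : u ∈ Bset T i := by
          rw [Bset, Finset.mem_filter, Finset.mem_range, hW]
          exact ⟨hun, hrm⟩
        have huB' : u ∈ Bset T i' := by
          rw [Bset, Finset.mem_filter, Finset.mem_range]
          exact ⟨hun, hrm⟩
        have hmem : (lc T ((rot T i').take u), T.getD ((i' + u) % T.length) 0) ∈ Phi T i := by
          rw [h, Phi]
          exact Finset.mem_image.mpr ⟨u, huB', rfl⟩
        obtain ⟨s, hsB, hpair⟩ := Finset.mem_image.mp hmem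
        have hsn : s < T.length := by
          have := (Finset.mem_filter.mp hsB).1
          simpa [Finset.mem_range] using this
        have h1 := (Prod.mk.inj hpair).1
        have h2 := (Prod.mk.inj hpair).2
        have hsu : s = u := by
          by_contra hne
          rcases Nat.lt_or_ge s u with hc | hc
          · have := lc_len_lt T hi hc (by omega)
            rw [h1, ← hW] at this
            omega
          · have hc' : u < s := by omega
            have := lc_len_lt T hi hc' (by omega)
            rw [h1, ← hW] at this
            omega
        rw [hsu] at h2
        exact h2
      · -- forced case: both next characters lie in `SigmaR` of card ≤ 1
        have hcard : (SigmaR T ((rot T i').take u)).card ≤ 1 := by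
          rw [RightMaximal] at hrm
          omega
        have m1 : T.getD ((i + u) % T.length) 0 ∈ SigmaR T ((rot T i').take u) := by
          rw [← hW]
          exact chr_mem_sigmaR_take T hi hun
        have m2 : T.getD ((i' + u) % T.length) 0 ∈ SigmaR T ((rot T i').take u) :=
          chr_mem_sigmaR_take T hi' hun
        exact Finset.card_le_one.mp hcard _ m1 _ m2
  have := key T.length (le_refl _)
  rw [List.take_of_length_le (by rw [length_rot]),
    List.take_of_length_le (by rw [length_rot])] at this
  exact hT.rot_inj hi hi' this

lemma WF.count (hT : WF T) : T.length ≤ 2 ^ eCount T := by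
  have h1 : (Finset.range T.length).card ≤ ((Arcs T).powerset).card := by
    apply Finset.card_le_card_of_injOn (fun i => Phi T i)
    · intro i hiR
      rw [Finset.mem_coe, Finset.mem_range] at hiR
      exact Finset.mem_powerset.mpr (phi_subset_arcs T (hT := hT) hiR)
    · intro a ha b hb hab
      simp only [Finset.coe_range, Set.mem_Iio] at ha hb
      exact phi_inj T (hT := hT) ha hb hab
  rw [Finset.card_range, Finset.card_powerset, card_arcs] at h1
  exact h1

end EP
end EProof5

/-- There is a constant `c > 0` such that for every `n`, every
`σ < n − 1` and every string `T ∈ [1..σ]^{n−1}#`, the number of arcs of the CDAWG of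
`T` is at least `c · log n`: `e_T ≥ c · log n`. -/
theorem eCount_lower_bound :
    ∃ c : ℝ, 0 < c ∧
      ∀ (σ : ℕ) (T : List ℕ), Wellformed σ T → σ + 1 < T.length →
        c * Real.log (T.length : ℝ) ≤ (eCount T : ℝ) := by
  have hl2 : 0 < Real.log 2 := Real.log_pos (by norm_num)
  refine ⟨(Real.log 2)⁻¹, inv_pos.mpr hl2, ?_⟩
  intro σ T hwf hσ
  obtain ⟨S, hS1, hS2⟩ := hwf
  have hWF : EP.WF T := ⟨⟨S, hS1, fun c hc => (hS2 c hc).1⟩, by omega⟩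
  have h := EP.WF.count T hWF
  have hcast : (T.length : ℝ) ≤ 2 ^ eCount T := by exact_mod_cast h
  have hpos : (0 : ℝ) < (T.length : ℝ) := by
    have h2 := hWF.2
    have : (2 : ℝ) ≤ (T.length : ℝ) := by exact_mod_cast h2
    linarith
  have hlog : Real.log (T.length : ℝ) ≤ (eCount T : ℝ) * Real.log 2 := by
    calc Real.log (T.length : ℝ) ≤ Real.log ((2 : ℝ) ^ eCount T) :=
          Real.log_le_log hpos hcast
    _ = (eCount T : ℝ) * Real.log 2 := Real.log_pow _ _
  have step : (Real.log 2)⁻¹ * Real.log (T.length : ℝ)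
      ≤ (Real.log 2)⁻¹ * ((eCount T : ℝ) * Real.log 2) :=
    mul_le_mul_of_nonneg_left hlog (by positivity)
  calc (Real.log 2)⁻¹ * Real.log (T.length : ℝ)
      ≤ (Real.log 2)⁻¹ * ((eCount T : ℝ) * Real.log 2) := step
  _ = (eCount T : ℝ) := by
      rw [mul_comm ((eCount T : ℝ)) (Real.log 2), ← mul_assoc,
        inv_mul_cancel₀ (ne_of_gt hl2), one_mul]
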